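/- Let G be a compact Lie group with identity component G_e. Then the map Sub(G) → Sub(G_e) sending a closed subgroup H to H ∩ G_e is continuous, where both Sub(G) and Sub(G_e) carry the h-topology (the topology of the Hausdorff metric on closed subgroups). -/

import Mathlib

open TopologicalSpace

/-- A topological group is a Lie group if it carries a compatible smooth manifold
structure modelled on some Euclidean space making multiplication and inversion smooth. -/
def IsLieGroupStruct (G : Type*) [TopologicalSpace G] [Group G] : Prop :=
  ∃ n : ℕ, ∃ _ : ChartedSpace (EuclideanSpace ℝ (Fin n)) G,
    LieGroup (modelWithCornersSelf ℝ (EuclideanSpace ℝ (Fin n))) (⊤ : ℕ∞) G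

/-- A metric on a group is bi-invariant if left and right translations are isometries. -/
def BiInvariantMetric (G : Type*) [Group G] [MetricSpace G] : Prop :=
  ∀ g x y : G, dist (g * x) (g * y) = dist x y ∧ dist (x * g) (y * g) = dist x y

/-- The space `Sub(G)` of closed subgroups of `G`. -/
abbrev SubG (G : Type*) [Group G] [TopologicalSpace G] :=
  {H : Subgroup G // IsClosed (H : Set G)}

/-- The `h`-topology on `Sub(G)`, induced by the Hausdorff (extended) metric on the
space of closed subsets of the metric space `G`. -/
noncomputable instance SubG.instTopologicalSpace (G : Type*) [Group G] [MetricSpace G] :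
    TopologicalSpace (SubG G) :=
  TopologicalSpace.induced
    (fun H : SubG G => (⟨(H.1 : Set G), H.2⟩ : TopologicalSpace.Closeds G))
    inferInstance

/-- The map `Sub(G) → Sub(G_e)` sending a closed subgroup `H` to `H ∩ G_e`,
viewed as a closed subgroup of `G_e`. -/
def restrictSub {G : Type*} [Group G] [MetricSpace G] (Ge : Subgroup G) (H : SubG G) :
    SubG ↥Ge :=
  ⟨H.1.subgroupOf Ge, H.2.preimage continuous_subtype_val⟩


section Aux

open OmegaCompletePartialOrder

variable {G : Type*} [TopologicalSpace G] (Ge : Set G)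

/-- Restriction of a closed subset of `G` to a subset `Ge` of `G`. -/
def closedsRestrict (C : TopologicalSpace.Closeds G) : TopologicalSpace.Closeds ↥Ge :=
  ⟨Subtype.val ⁻¹' (C : Set G), C.isClosed.preimage continuous_subtype_val⟩

theorem closedsRestrict_mono : Monotone (closedsRestrict Ge) := by
  intro C C' h x hx
  exact h hx

/-- If `Ge` is open, preimage under the inclusion commutes with closures. -/
theorem preimage_closure_of_isOpen (hGe : IsOpen Ge) (S : Set G) :
    (Subtype.val ⁻¹' closure S : Set ↥Ge) = closure (Subtype.val ⁻¹' S) := by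
  apply Set.Subset.antisymm
  · intro x hx
    rw [closure_subtype, Set.image_preimage_eq_inter_range, Subtype.range_coe_subtype]
    have h1 : (↑x : G) ∈ Ge ∩ closure S := ⟨x.2, hx⟩
    have h2 := hGe.inter_closure h1
    rwa [Set.inter_comm] at h2
  · exact closure_minimal (Set.preimage_mono subset_closure)
      (isClosed_closure.preimage continuous_subtype_val)

/-- If `Ge` is open, restriction of closed sets is ω-Scott continuous. -/
theorem closedsRestrict_scott (hGe : IsOpen Ge) :
    ωScottContinuous (closedsRestrict Ge) := by
  rw [ωScottContinuous_iff_monotone_map_ωSup]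
  refine ⟨closedsRestrict_mono Ge, fun c => ?_⟩
  apply SetLike.coe_injective
  have h1 : ((ωSup c : TopologicalSpace.Closeds G) : Set G) =
      closure (⋃₀ ((fun C : TopologicalSpace.Closeds G => (C : Set G)) ''
        Set.range c)) := rfl
  have h2 : ((ωSup (c.map ⟨closedsRestrict Ge, closedsRestrict_mono Ge⟩) :
        TopologicalSpace.Closeds ↥Ge) : Set ↥Ge) =
      closure (⋃₀ ((fun C : TopologicalSpace.Closeds ↥Ge => (C : Set ↥Ge)) ''
        Set.range (c.map ⟨closedsRestrict Ge, closedsRestrict_mono Ge⟩))) := rfl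
  show (Subtype.val ⁻¹' ((ωSup c : TopologicalSpace.Closeds G) : Set G) : Set ↥Ge) = _
  rw [h1, h2, preimage_closure_of_isOpen Ge hGe]
  refine congrArg closure ?_
  ext x
  simp [closedsRestrict, Chain.map_coe, Set.sUnion_image]

end Aux

/-- Restriction of closed sets to a clopen subset of a compact metric space is continuous
for the Hausdorff edistance. -/
theorem closedsRestrict_continuous {G : Type*} [MetricSpace G] [CompactSpace G] (Ge : Set G)
    (ho : IsOpen Ge) (hc : IsClosed Ge) : Continuous (closedsRestrict Ge) := by
  obtain ⟨δ0, hδ0, hth⟩ := hc.isCompact.exists_thickening_subset_open ho subset_rfl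
  have key : ∀ x y : G, x ∈ Ge → edist y x < ENNReal.ofReal δ0 → y ∈ Ge := by
    intro x y hx hxy
    apply hth
    rw [Metric.mem_thickening_iff]
    exact ⟨x, hx, edist_lt_ofReal.1 hxy⟩
  rw [EMetric.continuous_iff]
  intro b ε hε
  refine ⟨min (ENNReal.ofReal δ0) ε, lt_min (ENNReal.ofReal_pos.2 hδ0) hε, fun a ha => ?_⟩
  obtain ⟨r, har, hr⟩ := exists_between ha
  have hrδ : r ≤ ENNReal.ofReal δ0 := hr.le.trans (min_le_left _ _)
  have hrε : r < ε := hr.trans_le (min_le_right _ _)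
  have hab : Metric.hausdorffEDist (a : Set G) (b : Set G) < r := har
  have hba : Metric.hausdorffEDist (b : Set G) (a : Set G) < r := by
    rw [Metric.hausdorffEDist_comm]; exact hab
  refine lt_of_le_of_lt ?_ hrε
  show Metric.hausdorffEDist (Subtype.val ⁻¹' (a : Set G) : Set Ge)
    (Subtype.val ⁻¹' (b : Set G)) ≤ r
  apply Metric.hausdorffEDist_le_of_mem_edist
  · intro x hx
    obtain ⟨y, hy, hxy⟩ := Metric.exists_edist_lt_of_hausdorffEDist_lt (show (x : G) ∈ (a : Set G) from hx) hab
    refine ⟨⟨y, key x y x.2 ?_⟩, hy, hxy.le⟩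
    rw [edist_comm]; exact hxy.trans_le hrδ
  · intro x hx
    obtain ⟨y, hy, hxy⟩ := Metric.exists_edist_lt_of_hausdorffEDist_lt (show (x : G) ∈ (b : Set G) from hx) hba
    refine ⟨⟨y, key x y x.2 ?_⟩, hy, hxy.le⟩
    rw [edist_comm]; exact hxy.trans_le hrδ

/-- Let `G` be a compact Lie group with identity component `G_e`.
Then the map `Sub(G) → Sub(G_e)`, `H ↦ H ∩ G_e`, is continuous for the `h`-topologies
(the topologies of the Hausdorff metric on closed subgroups). -/
theorem restrictSub_continuous
    {G : Type*} [Group G] [MetricSpace G] [IsTopologicalGroup G] [CompactSpace G]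
    (hbi : BiInvariantMetric G) (hlie : IsLieGroupStruct G)
    (Ge : Subgroup G) (hGe : (Ge : Set G) = connectedComponent (1 : G)) :
    Continuous (restrictSub Ge) := by
  -- `G` is locally connected, being a manifold, so `Ge` is open.
  obtain ⟨n, cs, -⟩ := hlie
  haveI : ChartedSpace (EuclideanSpace ℝ (Fin n)) G := cs
  haveI : LocallyConnectedSpace G :=
    ChartedSpace.locallyConnectedSpace (EuclideanSpace ℝ (Fin n)) G
  have hGe_open : IsOpen (Ge : Set G) := by rw [hGe]; exact isOpen_connectedComponent
  have hFcont : Continuous (closedsRestrict (Ge : Set G)) :=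
    closedsRestrict_continuous _ hGe_open (by rw [hGe]; exact isClosed_connectedComponent)
  have he1cont : Continuous
      (fun K : SubG G => (⟨(K.1 : Set G), K.2⟩ : TopologicalSpace.Closeds G)) :=
    continuous_induced_dom
  rw [show (SubG.instTopologicalSpace ↥Ge : TopologicalSpace (SubG ↥Ge)) =
      TopologicalSpace.induced
        (fun H : SubG ↥Ge => (⟨(H.1 : Set ↥Ge), H.2⟩ : TopologicalSpace.Closeds ↥Ge))
        inferInstance from rfl]
  rw [continuous_induced_rng]
  have heq : (fun H : SubG ↥Ge =>
        (⟨(H.1 : Set ↥Ge), H.2⟩ : TopologicalSpace.Closeds ↥Ge)) ∘ restrictSub Ge =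
      closedsRestrict (Ge : Set G) ∘
        (fun K : SubG G => (⟨(K.1 : Set G), K.2⟩ : TopologicalSpace.Closeds G)) := by
    funext H
    apply SetLike.coe_injective
    rfl
  rw [heq]
  exact hFcont.comp he1cont
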